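/- The Mills ratio U(z) := Φ(−z)/φ(z) is infinitely differentiable on ℝ, strictly decreasing on ℝ, strictly convex on ℝ, and satisfies z² U′(z) → −1 as z → +∞ (i.e. U′(z) ~ −1/z² as z → ∞). -/

import Mathlib

open MeasureTheory Filter Topology

/-- Standard normal density `φ(z) = e^{-z²/2}/√(2π)`. -/
noncomputable def stdPDF (z : ℝ) : ℝ := Real.exp (-(z^2)/2) / Real.sqrt (2*Real.pi)

/-- Standard normal distribution function `Φ(z) = ∫_{-∞}^z φ(t) dt`. -/
noncomputable def stdCDF (z : ℝ) : ℝ := ∫ t in Set.Iic z, stdPDF t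

/-- Mills ratio `U(z) = Φ(-z)/φ(z)`. -/
noncomputable def mills (z : ℝ) : ℝ := stdCDF (-z) / stdPDF z

lemma sqrt2pi_pos : 0 < Real.sqrt (2*Real.pi) :=
  Real.sqrt_pos.2 (by positivity)

lemma stdPDF_pos (z : ℝ) : 0 < stdPDF z :=
  div_pos (Real.exp_pos _) sqrt2pi_pos

lemma stdPDF_ne (z : ℝ) : stdPDF z ≠ 0 := (stdPDF_pos z).ne'

lemma stdPDF_neg (z : ℝ) : stdPDF (-z) = stdPDF z := by
  simp [stdPDF, neg_pow]

lemma contDiff_stdPDF : ContDiff ℝ (⊤:ℕ∞) stdPDF := by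
  unfold stdPDF
  exact (Real.contDiff_exp.comp (((contDiff_id.pow 2).neg).div_const 2)).div_const _

lemma continuous_stdPDF : Continuous stdPDF := contDiff_stdPDF.continuous

lemma hasDerivAt_stdPDF (z : ℝ) : HasDerivAt stdPDF (-z * stdPDF z) z := by
  have h1 : HasDerivAt (fun x : ℝ => -(x^2)/2) (-z) z := by
    have := ((hasDerivAt_pow 2 z).neg).div_const 2
    exact this.congr_deriv (by norm_num; ring)
  have h2 := (h1.exp).div_const (Real.sqrt (2*Real.pi))
  exact h2.congr_deriv (by unfold stdPDF; ring)

lemma integrable_stdPDF : Integrable stdPDF := by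
  have h := (integrable_exp_neg_mul_sq (by norm_num : (0:ℝ) < 1/2)).div_const
    (Real.sqrt (2*Real.pi))
  refine h.congr (Eventually.of_forall fun x => ?_)
  unfold stdPDF
  ring_nf

lemma stdCDF_eq (x : ℝ) : stdCDF x = stdCDF 0 + ∫ t in (0:ℝ)..x, stdPDF t := by
  have := intervalIntegral.integral_Iic_sub_Iic (μ := volume) (f := stdPDF)
    integrable_stdPDF.integrableOn integrable_stdPDF.integrableOn (a := 0) (b := x)
  unfold stdCDF
  linarith

lemma hasDerivAt_stdCDF (x : ℝ) : HasDerivAt stdCDF (stdPDF x) x := by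
  have h1 : HasDerivAt (fun u => ∫ t in (0:ℝ)..u, stdPDF t) (stdPDF x) x :=
    intervalIntegral.integral_hasDerivAt_right
      (integrable_stdPDF.intervalIntegrable)
      (continuous_stdPDF.stronglyMeasurableAtFilter _ _)
      continuous_stdPDF.continuousAt
  exact (h1.const_add (stdCDF 0)).congr_of_eventuallyEq
    (Eventually.of_forall fun y => stdCDF_eq y)

lemma stdCDF_pos (x : ℝ) : 0 < stdCDF x := by
  unfold stdCDF
  rw [setIntegral_pos_iff_support_of_nonneg_ae
    (Eventually.of_forall fun t => (stdPDF_pos t).le) integrable_stdPDF.integrableOn]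
  have : Function.support stdPDF ∩ Set.Iic x = Set.Iic x := by
    rw [Set.inter_eq_right]
    intro t _
    exact stdPDF_ne t
  rw [this, Real.volume_Iic]
  exact ENNReal.zero_lt_top

lemma contDiff_stdCDF : ContDiff ℝ (⊤:ℕ∞) stdCDF := by
  rw [contDiff_infty_iff_deriv]
  have hd : deriv stdCDF = stdPDF := funext fun x => (hasDerivAt_stdCDF x).deriv
  exact ⟨fun x => (hasDerivAt_stdCDF x).differentiableAt, hd ▸ contDiff_stdPDF⟩

lemma stdCDF_le_exp {x : ℝ} (hx : x ≤ -2) : stdCDF x ≤ Real.exp x / Real.sqrt (2*Real.pi) := by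
  have h1 : stdCDF x ≤ ∫ t in Set.Iic x, Real.exp t / Real.sqrt (2*Real.pi) := by
    refine setIntegral_mono_on integrable_stdPDF.integrableOn
      (((integrableOn_exp_Iic x).div_const _)) measurableSet_Iic ?_
    intro t ht
    have ht' : t ≤ -2 := le_trans ht hx
    have : -(t^2)/2 ≤ t := by nlinarith
    unfold stdPDF
    gcongr
  calc stdCDF x ≤ _ := h1
    _ = Real.exp x / Real.sqrt (2*Real.pi) := by
      rw [integral_div, integral_exp_Iic]

lemma tendsto_pow_mul_stdPDF (n : ℕ) :
    Tendsto (fun z => z^n * stdPDF z) atTop (𝓝 0) := by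
  have hb : Tendsto (fun z : ℝ => z^n * Real.exp (-z) / Real.sqrt (2*Real.pi)) atTop (𝓝 0) := by
    simpa using (Real.tendsto_pow_mul_exp_neg_atTop_nhds_zero n).div_const (Real.sqrt (2*Real.pi))
  refine tendsto_of_tendsto_of_tendsto_of_le_of_le' tendsto_const_nhds hb ?_ ?_
  · filter_upwards [eventually_ge_atTop (0:ℝ)] with z hz
    exact mul_nonneg (pow_nonneg hz n) (stdPDF_pos z).le
  · filter_upwards [eventually_ge_atTop (2:ℝ)] with z hz
    have h1 : -(z^2)/2 ≤ -z := by nlinarith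
    have h2 : stdPDF z ≤ Real.exp (-z) / Real.sqrt (2*Real.pi) :=
      by unfold stdPDF; gcongr
    have h3 : (0:ℝ) ≤ z^n := by positivity
    calc z^n * stdPDF z ≤ z^n * (Real.exp (-z) / Real.sqrt (2*Real.pi)) :=
          mul_le_mul_of_nonneg_left h2 h3
      _ = z^n * Real.exp (-z) / Real.sqrt (2*Real.pi) := by ring

lemma tendsto_pow_mul_stdCDF_neg (n : ℕ) :
    Tendsto (fun z => z^n * stdCDF (-z)) atTop (𝓝 0) := by
  have hb : Tendsto (fun z : ℝ => z^n * Real.exp (-z) / Real.sqrt (2*Real.pi)) atTop (𝓝 0) := by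
    simpa using (Real.tendsto_pow_mul_exp_neg_atTop_nhds_zero n).div_const (Real.sqrt (2*Real.pi))
  refine tendsto_of_tendsto_of_tendsto_of_le_of_le' tendsto_const_nhds hb ?_ ?_
  · filter_upwards [eventually_ge_atTop (0:ℝ)] with z hz
    exact mul_nonneg (by positivity) (stdCDF_pos (-z)).le
  · filter_upwards [eventually_ge_atTop (2:ℝ)] with z hz
    have h2 : stdCDF (-z) ≤ Real.exp (-z) / Real.sqrt (2*Real.pi) :=
      stdCDF_le_exp (by linarith)
    have h3 : (0:ℝ) ≤ z^n := by positivity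
    calc z^n * stdCDF (-z) ≤ z^n * (Real.exp (-z) / Real.sqrt (2*Real.pi)) :=
          mul_le_mul_of_nonneg_left h2 h3
      _ = z^n * Real.exp (-z) / Real.sqrt (2*Real.pi) := by ring

lemma hasDerivAt_stdCDF_neg (z : ℝ) :
    HasDerivAt (fun z => stdCDF (-z)) (-stdPDF z) z := by
  have := (hasDerivAt_stdCDF (-z)).comp z (hasDerivAt_neg z)
  simpa [stdPDF_neg, Function.comp_def] using this


lemma continuous_stdCDF : Continuous stdCDF := contDiff_stdCDF.continuous

lemma pos_of_strictAnti_tendsto {f : ℝ → ℝ} (hf : StrictAnti f)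
    (h0 : Tendsto f atTop (𝓝 0)) (x : ℝ) : 0 < f x := by
  have h1 : 0 ≤ f (x+1) := le_of_tendsto h0 (by
    filter_upwards [eventually_ge_atTop (x+1)] with y hy
    exact hf.antitone hy)
  exact lt_of_le_of_lt h1 (hf (lt_add_one x))

lemma pos_of_strictAntiOn_tendsto {f : ℝ → ℝ} (hf : StrictAntiOn f (Set.Ioi 0))
    (h0 : Tendsto f atTop (𝓝 0)) {x : ℝ} (hx : 0 < x) : 0 < f x := by
  have hx1 : x + 1 ∈ Set.Ioi (0:ℝ) := by simp only [Set.mem_Ioi]; linarith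
  have h1 : 0 ≤ f (x+1) := le_of_tendsto h0 (by
    filter_upwards [eventually_gt_atTop (x+1)] with y hy
    exact (hf hx1 (by simp only [Set.mem_Ioi]; linarith) hy).le)
  exact lt_of_le_of_lt h1 (hf hx hx1 (lt_add_one x))

lemma key_h (z : ℝ) : z * stdCDF (-z) < stdPDF z := by
  set f : ℝ → ℝ := fun z => stdPDF z - z * stdCDF (-z) with hfdef
  have hder : ∀ w : ℝ, HasDerivAt f (-stdCDF (-w)) w := by
    intro w
    have h2 := (hasDerivAt_id' w).mul (hasDerivAt_stdCDF_neg w)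
    have h3 := (hasDerivAt_stdPDF w).sub h2
    refine h3.congr_deriv ?_
    ring
  have hanti : StrictAnti f := strictAnti_of_deriv_neg (fun w => by
    rw [(hder w).deriv]
    simpa using stdCDF_pos (-w))
  have hlim : Tendsto f atTop (𝓝 0) := by
    have := (tendsto_pow_mul_stdPDF 0).sub (tendsto_pow_mul_stdCDF_neg 1)
    simp only [pow_zero, one_mul, pow_one, sub_zero] at this
    simpa using this
  have := pos_of_strictAnti_tendsto hanti hlim z
  simp only [hfdef] at this
  linarith

lemma key_g (z : ℝ) : z * stdPDF z < (1 + z^2) * stdCDF (-z) := by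
  set f : ℝ → ℝ := fun z => (1 + z^2) * stdCDF (-z) - z * stdPDF z with hfdef
  have hder : ∀ w : ℝ, HasDerivAt f (2*w*stdCDF (-w) - 2*stdPDF w) w := by
    intro w
    have h1 := ((hasDerivAt_pow 2 w).const_add 1).mul (hasDerivAt_stdCDF_neg w)
    have h2 := (hasDerivAt_id' w).mul (hasDerivAt_stdPDF w)
    have h3 := h1.sub h2
    refine h3.congr_deriv ?_
    ring
  have hanti : StrictAnti f := strictAnti_of_deriv_neg (fun w => by
    rw [(hder w).deriv]
    have := key_h w
    linarith)
  have hlim : Tendsto f atTop (𝓝 0) := by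
    have := ((tendsto_pow_mul_stdCDF_neg 0).add (tendsto_pow_mul_stdCDF_neg 2)).sub
      (tendsto_pow_mul_stdPDF 1)
    simp only [pow_zero, one_mul, pow_one, add_zero, sub_zero, zero_add] at this
    refine this.congr fun w => ?_
    ring
  have := pos_of_strictAnti_tendsto hanti hlim z
  simp only [hfdef] at this
  linarith

lemma key_A {z : ℝ} (hz : 0 < z) : (z^2 - 1) * stdPDF z < z^3 * stdCDF (-z) := by
  set f : ℝ → ℝ := fun z => z^3 * stdCDF (-z) - (z^2 - 1) * stdPDF z with hfdef
  have hder : ∀ w : ℝ, HasDerivAt f (-(3*w) * (stdPDF w - w * stdCDF (-w))) w := by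
    intro w
    have h1 := (hasDerivAt_pow 3 w).mul (hasDerivAt_stdCDF_neg w)
    have h2 := ((hasDerivAt_pow 2 w).sub_const 1).mul (hasDerivAt_stdPDF w)
    have h3 := h1.sub h2
    refine h3.congr_deriv ?_
    ring
  have hcont : Continuous f := by
    apply Continuous.sub
    · exact (continuous_pow 3).mul (continuous_stdCDF.comp continuous_neg)
    · exact ((continuous_pow 2).sub continuous_const).mul continuous_stdPDF
  have hanti : StrictAntiOn f (Set.Ioi 0) := by
    refine strictAntiOn_of_deriv_neg (convex_Ioi 0) hcont.continuousOn (fun w hw => ?_)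
    rw [interior_Ioi] at hw
    rw [(hder w).deriv]
    have h1 := key_h w
    have hw0 : 0 < w := hw
    nlinarith
  have hlim : Tendsto f atTop (𝓝 0) := by
    have := ((tendsto_pow_mul_stdCDF_neg 3).sub (tendsto_pow_mul_stdPDF 2)).add
      (tendsto_pow_mul_stdPDF 0)
    simp only [pow_zero, one_mul, sub_zero, add_zero] at this
    refine this.congr fun w => ?_
    ring
  have := pos_of_strictAntiOn_tendsto hanti hlim hz
  simp only [hfdef] at this
  linarith

lemma key_B {z : ℝ} (hz : 0 < z) : z^5 * stdCDF (-z) < (z^4 - z^2 + 3) * stdPDF z := by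
  set f : ℝ → ℝ := fun z => (z^4 - z^2 + 3) * stdPDF z - z^5 * stdCDF (-z) with hfdef
  have hder : ∀ w : ℝ,
      HasDerivAt f (-(5*w) * (w^3 * stdCDF (-w) - (w^2 - 1) * stdPDF w)) w := by
    intro w
    have h1 := (((hasDerivAt_pow 4 w).sub (hasDerivAt_pow 2 w)).add_const 3).mul
      (hasDerivAt_stdPDF w)
    have h2 := (hasDerivAt_pow 5 w).mul (hasDerivAt_stdCDF_neg w)
    have h3 := h1.sub h2
    refine h3.congr_deriv ?_
    simp only [Pi.sub_apply]
    ring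
  have hcont : Continuous f := by
    apply Continuous.sub
    · exact (((continuous_pow 4).sub (continuous_pow 2)).add continuous_const).mul
        continuous_stdPDF
    · exact (continuous_pow 5).mul (continuous_stdCDF.comp continuous_neg)
  have hanti : StrictAntiOn f (Set.Ioi 0) := by
    refine strictAntiOn_of_deriv_neg (convex_Ioi 0) hcont.continuousOn (fun w hw => ?_)
    rw [interior_Ioi] at hw
    rw [(hder w).deriv]
    have h1 := key_A (show (0:ℝ) < w from hw)
    have hw0 : 0 < w := hw
    nlinarith
  have hlim : Tendsto f atTop (𝓝 0) := by
    have := (((tendsto_pow_mul_stdPDF 4).sub (tendsto_pow_mul_stdPDF 2)).add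
      ((tendsto_pow_mul_stdPDF 0).const_mul (3:ℝ))).sub (tendsto_pow_mul_stdCDF_neg 5)
    norm_num at this
    refine this.congr fun w => ?_
    ring
  have := pos_of_strictAntiOn_tendsto hanti hlim hz
  simp only [hfdef] at this
  linarith

lemma hasDerivAt_mills (z : ℝ) : HasDerivAt mills (z * mills z - 1) z := by
  have h := (hasDerivAt_stdCDF_neg z).div (hasDerivAt_stdPDF z) (stdPDF_ne z)
  refine h.congr_deriv ?_
  unfold mills
  have hφ := stdPDF_ne z
  field_simp
  ring

lemma deriv_mills_eq : deriv mills = fun z => z * mills z - 1 :=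
  funext fun z => (hasDerivAt_mills z).deriv

lemma deriv_mills_apply (z : ℝ) : deriv mills z = z * mills z - 1 :=
  (hasDerivAt_mills z).deriv

lemma contDiff_mills : ContDiff ℝ (⊤:ℕ∞) mills :=
  (contDiff_stdCDF.comp contDiff_neg).div contDiff_stdPDF stdPDF_ne

lemma deriv_mills_neg (z : ℝ) : deriv mills z < 0 := by
  rw [deriv_mills_apply]
  have h := key_h z
  have hφ := stdPDF_pos z
  have : z * mills z < 1 := by
    unfold mills
    rw [mul_div_assoc']
    exact (div_lt_one hφ).2 h
  linarith

lemma hasDerivAt_deriv_mills (z : ℝ) :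
    HasDerivAt (deriv mills) ((1 + z^2) * mills z - z) z := by
  rw [deriv_mills_eq]
  have h := ((hasDerivAt_id' z).mul (hasDerivAt_mills z)).sub_const 1
  refine h.congr_deriv ?_
  ring

lemma deriv2_mills_pos (z : ℝ) : 0 < deriv (deriv mills) z := by
  rw [(hasDerivAt_deriv_mills z).deriv]
  have h := key_g z
  have hφ := stdPDF_pos z
  have : z < (1 + z^2) * mills z := by
    unfold mills
    rw [← mul_div_assoc]
    exact (lt_div_iff₀ hφ).2 (by linarith)
  linarith

/-- **Properties of the Mills ratio.** `U` is infinitely differentiable, strictly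
decreasing, strictly convex, and `U'(z) ~ -1/z²` as `z → ∞`
(i.e. `z² U'(z) → -1`). -/
theorem mills_ratio_properties :
    (∀ n : ℕ, ContDiff ℝ n mills) ∧
    StrictAnti mills ∧
    StrictConvexOn ℝ Set.univ mills ∧
    Tendsto (fun z => z ^ 2 * deriv mills z) atTop (𝓝 (-1)) := by
  refine ⟨fun n => contDiff_mills.of_le (by exact_mod_cast le_top),
    strictAnti_of_deriv_neg deriv_mills_neg, ?_, ?_⟩
  · refine strictConvexOn_of_deriv2_pos convex_univ contDiff_mills.continuous.continuousOn
      (fun x _ => ?_)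
    have h2 : deriv^[2] mills x = deriv (deriv mills) x := by
      simp only [Function.iterate_succ, Function.iterate_zero, Function.comp_apply, id_eq]
    rw [h2]
    exact deriv2_mills_pos x
  · have hupper : Tendsto (fun z : ℝ => -1 + 3 / z^2) atTop (𝓝 (-1)) := by
      have h3 : Tendsto (fun z : ℝ => 3 / z^2) atTop (𝓝 0) :=
        tendsto_const_nhds.div_atTop (tendsto_pow_atTop two_ne_zero)
      simpa using tendsto_const_nhds.add h3
    refine tendsto_of_tendsto_of_tendsto_of_le_of_le' tendsto_const_nhds hupper ?_ ?_
    · filter_upwards [eventually_gt_atTop (0:ℝ)] with z hz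
      have hφ := stdPDF_pos z
      have hA := key_A hz
      rw [deriv_mills_apply]
      have hE : z^2 * (z * mills z - 1)
          = (z^3 * stdCDF (-z) - z^2 * stdPDF z) / stdPDF z := by
        unfold mills; field_simp
      rw [hE, le_div_iff₀ hφ]
      nlinarith
    · filter_upwards [eventually_gt_atTop (0:ℝ)] with z hz
      have hφ := stdPDF_pos z
      have hB := key_B hz
      rw [deriv_mills_apply]
      have hE : z^2 * (z * mills z - 1)
          = (z^3 * stdCDF (-z) - z^2 * stdPDF z) / stdPDF z := by
        unfold mills; field_simp
      have h32 : (-1 + 3/z^2 : ℝ) = (3 - z^2)/z^2 := by field_simp; ring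
      rw [hE, h32, div_le_div_iff₀ hφ (by positivity)]
      nlinarith
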